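/- arXiv:1001.0368 — 3 statements merged into one kernel-verified Lean document; each statement's English description precedes it below -/
import Mathlib

section
/- Let g : [0,∞) → ℝ be nonnegative and C¹ with g'(t) ≤ -γ(t) g(t) + α(t) g(t)^p + β(t), p > 1, where α > 0, β, γ continuous, and let μ ∈ C¹, μ > 0, satisfy α(t) μ(t)^{-p} + β(t) ≤ μ(t)^{-1}(γ(t) - μ'(t) μ(t)^{-1}) for all t and μ(0) g(0) < 1. Then μ(t) g(t) < 1 for all t ≥ 0. -/
theorem stmt_4 (g g' α β γ μ μ' : ℝ → ℝ) (p : ℝ) (hp : 1 < p)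
    (hg0 : ∀ t, 0 ≤ t → 0 ≤ g t)
    (hgderiv : ∀ t, 0 ≤ t → HasDerivAt g (g' t) t)
    (hg'cont : ContinuousOn g' (Set.Ici 0))
    (hineq : ∀ t, 0 ≤ t → g' t ≤ -γ t * g t + α t * g t ^ p + β t)
    (hα : ∀ t, 0 ≤ t → 0 < α t)
    (hαc : ContinuousOn α (Set.Ici 0))
    (hβc : ContinuousOn β (Set.Ici 0))
    (hγc : ContinuousOn γ (Set.Ici 0))
    (hμpos : ∀ t, 0 ≤ t → 0 < μ t)
    (hμderiv : ∀ t, 0 ≤ t → HasDerivAt μ (μ' t) t)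
    (hμ'cont : ContinuousOn μ' (Set.Ici 0))
    (hμineq : ∀ t, 0 ≤ t →
      α t * (μ t) ^ (-p) + β t ≤ (μ t)⁻¹ * (γ t - μ' t * (μ t)⁻¹))
    (hinit : μ 0 * g 0 < 1) :
    ∀ t, 0 ≤ t → μ t * g t < 1 := by
  by_contra hcon
  push_neg at hcon
  obtain ⟨t₀, ht₀, ht₀1⟩ := hcon
  set h : ℝ → ℝ := fun t => μ t * g t with hhdef
  have hhd : ∀ t, 0 ≤ t → HasDerivAt h (μ' t * g t + μ t * g' t) t :=
    fun t ht => (hμderiv t ht).mul (hgderiv t ht)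
  have hhc : ContinuousOn h (Set.Ici 0) :=
    fun t ht => (hhd t ht).continuousAt.continuousWithinAt
  set S : Set ℝ := Set.Ici 0 ∩ h ⁻¹' Set.Ici 1 with hSdef
  have hSne : S.Nonempty := ⟨t₀, ht₀, ht₀1⟩
  have hSbdd : BddBelow S := ⟨0, fun x hx => hx.1⟩
  have hScl : IsClosed S :=
    hhc.preimage_isClosed_of_isClosed isClosed_Ici isClosed_Ici
  set T := sInf S with hTdef
  have hTS : T ∈ S := hScl.csInf_mem hSne hSbdd
  have hT0 : 0 ≤ T := hTS.1
  have hT1 : 1 ≤ h T := hTS.2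
  have hTpos : 0 < T := by
    rcases hT0.lt_or_eq with hlt | heq
    · exact hlt
    · exfalso; rw [← heq] at hT1; simp only [hhdef] at hT1; linarith
  have hlt : ∀ t, 0 ≤ t → t < T → h t < 1 := by
    intro t ht htT
    by_contra hge
    push_neg at hge
    exact absurd (csInf_le hSbdd ⟨ht, hge⟩) (not_le.2 htT)
  have hhT : h T = 1 := by
    refine le_antisymm ?_ hT1
    have htend : Filter.Tendsto h (nhdsWithin T (Set.Iio T)) (nhds (h T)) :=
      (hhd T hT0).continuousAt.continuousWithinAt
    refine le_of_tendsto htend ?_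
    have hmem : Set.Ioo 0 T ∈ nhdsWithin T (Set.Iio T) :=
      Filter.inter_mem (mem_nhdsWithin_of_mem_nhds (Ioi_mem_nhds hTpos))
        self_mem_nhdsWithin
    filter_upwards [hmem] with s hs
    exact (hlt s hs.1.le hs.2).le
  have hle1 : ∀ t ∈ Set.Icc (0:ℝ) T, h t ≤ 1 := by
    intro t ht
    rcases ht.2.lt_or_eq with hlt' | heq
    · exact (hlt t ht.1 hlt').le
    · rw [heq, hhT]
  -- The comparison coefficient
  set K : ℝ → ℝ := fun t => γ t - μ' t * (μ t)⁻¹ - α t * μ t ^ (1 - p) with hKdef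
  have hμc : ContinuousOn μ (Set.Ici 0) :=
    fun t ht => (hμderiv t ht).continuousAt.continuousWithinAt
  have hKc : ContinuousOn K (Set.Ici 0) :=
    (hγc.sub (hμ'cont.mul (hμc.inv₀ fun t ht => (hμpos t ht).ne'))).sub
      (hαc.mul (hμc.rpow_const fun t ht => Or.inl (hμpos t ht).ne'))
  obtain ⟨x₀, hx₀, hx₀max⟩ :=
    isCompact_Icc.exists_isMaxOn ⟨T, hT0, le_refl T⟩
      (hKc.mono fun x hx => hx.1)
  set M := K x₀ with hMdef
  -- Key differential inequality: h' ≤ M * (1 - h) on [0, T]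
  have key : ∀ t ∈ Set.Icc (0:ℝ) T, μ' t * g t + μ t * g' t ≤ M * (1 - h t) := by
    intro t ht
    have ht0 : (0:ℝ) ≤ t := ht.1
    have hm : 0 < μ t := hμpos t ht0
    have hgt : 0 ≤ g t := hg0 t ht0
    have hht0 : 0 ≤ h t := mul_nonneg hm.le hgt
    have hht1 : h t ≤ 1 := hle1 t ht
    have ha : 0 < α t := hα t ht0
    have hmp : 0 < μ t ^ p := Real.rpow_pos_of_pos hm p
    have hm1p : 0 < μ t ^ (1 - p) := Real.rpow_pos_of_pos hm (1 - p)
    have hdiv : μ t / μ t ^ p = μ t ^ (1 - p) := by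
      rw [Real.rpow_sub hm, Real.rpow_one]
    have hgp : g t ^ p = h t ^ p / μ t ^ p := by
      rw [hhdef, Real.mul_rpow hm.le hgt]
      field_simp
    have hmul : μ t * μ t ^ (-p) = μ t ^ (1 - p) := by
      rw [show (1:ℝ) - p = 1 + (-p) by ring, Real.rpow_add hm, Real.rpow_one]
    have hmulp : μ t * (μ t)⁻¹ = 1 := mul_inv_cancel₀ hm.ne'
    -- multiply hμineq by μ t > 0
    have hβ : μ t * β t ≤ γ t - μ' t * (μ t)⁻¹ - α t * μ t ^ (1 - p) := by
      have h1 := mul_le_mul_of_nonneg_left (hμineq t ht0) hm.le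
      have h2 : μ t * ((μ t)⁻¹ * (γ t - μ' t * (μ t)⁻¹))
          = γ t - μ' t * (μ t)⁻¹ := by
        rw [← mul_assoc, hmulp, one_mul]
      nlinarith [h1, hmul, h2]
    have hpow : h t ^ p ≤ h t := by
      rcases hht0.lt_or_eq with hpos | hzero
      · calc h t ^ p ≤ h t ^ (1:ℝ) :=
            Real.rpow_le_rpow_of_exponent_ge hpos hht1 hp.le
          _ = h t := Real.rpow_one _
      · rw [← hzero, Real.zero_rpow (by positivity)]
    have hterm : μ t * (α t * g t ^ p) = α t * μ t ^ (1 - p) * h t ^ p := by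
      rw [hgp, ← hdiv]; field_simp
    have hgeq : μ' t * g t = μ' t * (μ t)⁻¹ * h t := by
      rw [hhdef]; field_simp
    have step1 : μ t * g' t
        ≤ -(γ t) * h t + α t * μ t ^ (1 - p) * h t ^ p + μ t * β t := by
      have h1 := mul_le_mul_of_nonneg_left (hineq t ht0) hm.le
      calc μ t * g' t ≤ μ t * (-γ t * g t + α t * g t ^ p + β t) := h1
        _ = -(γ t) * h t + μ t * (α t * g t ^ p) + μ t * β t := by
            rw [hhdef]; ring
        _ = -(γ t) * h t + α t * μ t ^ (1 - p) * h t ^ p + μ t * β t := by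
            rw [hterm]
    have c1 : α t * μ t ^ (1 - p) * h t ^ p ≤ α t * μ t ^ (1 - p) * h t :=
      mul_le_mul_of_nonneg_left hpow (by positivity)
    have hKM : K t ≤ M := hx₀max ⟨ht0, ht.2⟩
    have c2 : 0 ≤ (M - K t) * (1 - h t) :=
      mul_nonneg (sub_nonneg.2 hKM) (sub_nonneg.2 hht1)
    simp only [hKdef] at c2
    rw [hgeq]
    nlinarith [step1, c1, hβ, c2]
  -- Monotone auxiliary function v = (1 - h) * exp (M t)
  set v : ℝ → ℝ := fun t => (1 - h t) * Real.exp (M * t) with hvdef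
  have hvd : ∀ t, 0 ≤ t → HasDerivAt v
      (-(μ' t * g t + μ t * g' t) * Real.exp (M * t)
        + (1 - h t) * (Real.exp (M * t) * M)) t := by
    intro t ht
    have e1 : HasDerivAt (fun s => Real.exp (M * s)) (Real.exp (M * t) * M) t := by
      simpa using ((hasDerivAt_id t).const_mul M).exp
    exact ((hhd t ht).const_sub 1).mul e1
  have hmono : MonotoneOn v (Set.Icc 0 T) := by
    apply monotoneOn_of_hasDerivWithinAt_nonneg (convex_Icc 0 T)
      (f' := fun t => -(μ' t * g t + μ t * g' t) * Real.exp (M * t)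
        + (1 - h t) * (Real.exp (M * t) * M))
    · intro t ht
      exact ((hvd t ht.1).continuousAt).continuousWithinAt
    · intro t ht
      rw [interior_Icc] at ht
      exact ((hvd t ht.1.le).hasDerivWithinAt)
    · intro t ht
      rw [interior_Icc] at ht
      have hk := key t ⟨ht.1.le, ht.2.le⟩
      have he : 0 < Real.exp (M * t) := Real.exp_pos _
      nlinarith [hk, he]
  have hv0 : 0 < v 0 := by
    simp only [hvdef, hhdef, mul_zero, Real.exp_zero, mul_one]
    linarith
  have hvT : v T = 0 := by
    simp only [hvdef, hhT]
    ring
  have := hmono ⟨le_refl 0, hT0⟩ ⟨hT0, le_refl T⟩ hT0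
  rw [hvT] at this
  linarith
end

section
/- Let g : [0,∞) → [0,∞) be C¹ and satisfy g'(t) ≤ −g(t) + c₃ r(t)^{-b} g(t)^p + c₂ |r'(t)| r(t)^{-b}, where p > 1, b > 0, c₂, c₃ > 0, and r : [0,∞) → (0,∞) is C¹, strictly decreasing to 0. Set k = (b+1)/(p−1), λ = r(0)^k/(2 g(0)) (assuming g(0) > 0). If for all t ≥ 0: c₃ r(t) λ^{-(p-1)} + c₂ λ |r'(t)| r(t)^{-(k+b)} + k |r'(t)| r(t)^{-1} ≤ 1, then g(t) ≤ λ^{-1} r(t)^k for all t ≥ 0; in particular g(t) → 0 as t → ∞. -/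
open Filter

set_option maxHeartbeats 2000000 in
theorem stmt_14 (g g' r r' : ℝ → ℝ) (p b c₂ c₃ k lam : ℝ)
    (hp : 1 < p) (hb : 0 < b) (hc₂ : 0 < c₂) (hc₃ : 0 < c₃)
    (hg0 : ∀ t, 0 ≤ t → 0 ≤ g t) (hg0pos : 0 < g 0)
    (hgC1 : ∀ t, 0 ≤ t → HasDerivAt g (g' t) t)
    (hg'cont : ContinuousOn g' (Set.Ici 0))
    (hrpos : ∀ t, 0 ≤ t → 0 < r t)
    (hrC1 : ∀ t, 0 ≤ t → HasDerivAt r (r' t) t)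
    (hr'cont : ContinuousOn r' (Set.Ici 0))
    (hranti : StrictAntiOn r (Set.Ici 0))
    (hrlim : Tendsto r atTop (nhds 0))
    (hineq : ∀ t, 0 ≤ t →
      g' t ≤ -g t + c₃ * r t ^ (-b) * g t ^ p + c₂ * |r' t| * r t ^ (-b))
    (hk : k = (b + 1) / (p - 1))
    (hlam : lam = r 0 ^ k / (2 * g 0))
    (hcond : ∀ t, 0 ≤ t →
      c₃ * r t * lam ^ (-(p - 1)) + c₂ * lam * |r' t| * r t ^ (-(k + b))
        + k * |r' t| * (r t)⁻¹ ≤ 1) :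
    (∀ t, 0 ≤ t → g t ≤ lam⁻¹ * r t ^ k) ∧ Tendsto g atTop (nhds 0) := by
  have hp1 : 0 < p - 1 := by linarith
  have hk0 : 0 < k := by rw [hk]; positivity
  have hr00 : 0 < r 0 := hrpos 0 le_rfl
  have hr0k : 0 < r 0 ^ k := Real.rpow_pos_of_pos hr00 k
  have hlam0 : 0 < lam := by rw [hlam]; positivity
  have hkp' : k * (p - 1) = b + 1 := by
    rw [hk, div_mul_cancel₀ _ hp1.ne']
  -- the derivative of r is nonpositive on [0,∞)
  have hr'np : ∀ t, 0 ≤ t → r' t ≤ 0 := by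
    intro t ht
    have hd : HasDerivWithinAt r (r' t) (Set.Ioi t) t := (hrC1 t ht).hasDerivWithinAt
    rw [hasDerivWithinAt_iff_tendsto_slope,
      Set.diff_singleton_eq_self (by simp)] at hd
    refine le_of_tendsto hd ?_
    filter_upwards [self_mem_nhdsWithin] with z hz
    have hz' : t < z := hz
    have hlt : r z < r t := hranti ht (ht.trans hz'.le) hz'
    rw [slope_def_field]
    exact div_nonpos_iff.mpr (Or.inr ⟨by linarith, by linarith⟩)
  -- monotonicity of r as a ≤ statement
  have hrle : ∀ s t : ℝ, 0 ≤ s → s ≤ t → r t ≤ r s := by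
    intro s t hs hst
    rcases eq_or_lt_of_le hst with rfl | h
    · exact le_rfl
    · exact (hranti hs (hs.trans hst) h).le
  -- barrier differential inequality
  have Hbar : ∀ t, 0 ≤ t →
      -(lam⁻¹ * r t ^ k) + c₃ * r t ^ (-b) * (lam⁻¹ * r t ^ k) ^ p
        + c₂ * |r' t| * r t ^ (-b) ≤ lam⁻¹ * (r' t * k * r t ^ (k - 1)) := by
    intro t ht
    have hR0 : 0 < r t := hrpos t ht
    have hr'A : r' t = -|r' t| := by
      rw [abs_of_nonpos (hr'np t ht)]; ring
    have hc := hcond t ht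
    have hmu0 : (0:ℝ) < lam⁻¹ * r t ^ k := by positivity
    have e0 : (lam⁻¹ * r t ^ k) ^ p = (lam ^ p)⁻¹ * r t ^ (k * p) := by
      rw [Real.mul_rpow (by positivity) (by positivity), Real.inv_rpow hlam0.le,
        ← Real.rpow_mul hR0.le]
    have e1 : lam⁻¹ * lam ^ (-(p - 1)) = (lam ^ p)⁻¹ := by
      rw [← Real.rpow_neg_one lam, ← Real.rpow_add hlam0, ← Real.rpow_neg hlam0.le]
      congr 1; ring
    have e2 : r t ^ (-b) * r t ^ (k * p) = r t ^ (k + 1) := by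
      rw [← Real.rpow_add hR0]; congr 1; linarith [hkp']
    have e2' : r t ^ (k + 1) = r t ^ k * r t := by
      rw [Real.rpow_add hR0, Real.rpow_one]
    have I1 : c₃ * r t ^ (-b) * (lam⁻¹ * r t ^ k) ^ p
        = lam⁻¹ * r t ^ k * (c₃ * r t * lam ^ (-(p - 1))) := by
      rw [e0]
      calc c₃ * r t ^ (-b) * ((lam ^ p)⁻¹ * r t ^ (k * p))
          = c₃ * (lam ^ p)⁻¹ * (r t ^ (-b) * r t ^ (k * p)) := by ring
        _ = c₃ * (lam ^ p)⁻¹ * (r t ^ k * r t) := by rw [e2, e2']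
        _ = c₃ * (lam⁻¹ * lam ^ (-(p - 1))) * (r t ^ k * r t) := by rw [e1]
        _ = lam⁻¹ * r t ^ k * (c₃ * r t * lam ^ (-(p - 1))) := by ring
    have I2 : lam⁻¹ * r t ^ k * (c₂ * lam * |r' t| * r t ^ (-(k + b)))
        = c₂ * |r' t| * r t ^ (-b) := by
      have e3 : r t ^ k * r t ^ (-(k + b)) = r t ^ (-b) := by
        rw [← Real.rpow_add hR0]; congr 1; ring
      calc lam⁻¹ * r t ^ k * (c₂ * lam * |r' t| * r t ^ (-(k + b)))
          = (lam⁻¹ * lam) * (c₂ * |r' t|) * (r t ^ k * r t ^ (-(k + b))) := by ring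
        _ = c₂ * |r' t| * r t ^ (-b) := by
            rw [inv_mul_cancel₀ hlam0.ne', e3]
            try ring
    have I3 : lam⁻¹ * r t ^ k * (k * |r' t| * (r t)⁻¹)
        = lam⁻¹ * (|r' t| * k * r t ^ (k - 1)) := by
      have e4 : r t ^ k * (r t)⁻¹ = r t ^ (k - 1) := by
        rw [← Real.rpow_neg_one (r t), ← Real.rpow_add hR0]; congr 1 <;> ring
      calc lam⁻¹ * r t ^ k * (k * |r' t| * (r t)⁻¹)
          = lam⁻¹ * (k * |r' t|) * (r t ^ k * (r t)⁻¹) := by ring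
        _ = lam⁻¹ * (|r' t| * k * r t ^ (k - 1)) := by rw [e4]; ring
    have hmul := mul_le_mul_of_nonneg_left hc hmu0.le
    rw [mul_add, mul_add, mul_one, I2, I3] at hmul
    have hgr : lam⁻¹ * (r' t * k * r t ^ (k - 1))
        = -(lam⁻¹ * (|r' t| * k * r t ^ (k - 1))) := by
      rw [abs_of_nonpos (hr'np t ht)]; ring
    rw [I1, hgr]
    linarith [hmul]
  -- main comparison on each interval [0,T]
  have key : ∀ T : ℝ, 0 ≤ T → ∀ t ∈ Set.Icc (0:ℝ) T, g t ≤ lam⁻¹ * r t ^ k := by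
    intro T hT
    set M : ℝ := lam⁻¹ * r 0 ^ k + 1 with hM
    set C : ℝ := c₃ * r T ^ (-b) * p * M ^ (p - 1) with hC
    have hrT0 : 0 < r T := hrpos T hT
    have hM0 : 0 < M := by positivity
    have hC0 : 0 < C := by positivity
    have h2g : lam⁻¹ * r 0 ^ k = 2 * g 0 := by
      rw [hlam, inv_div, div_mul_cancel₀ _ hr0k.ne']
    have keyε : ∀ ε : ℝ, 0 < ε → ε ≤ Real.exp (-(C * T)) →
        ∀ t ∈ Set.Icc (0:ℝ) T, g t ≤ lam⁻¹ * r t ^ k + ε * Real.exp (C * t) := by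
      intro ε hε hεle t htT
      refine image_le_of_deriv_right_lt_deriv_boundary' (f := g) (f' := g') (a := 0) (b := T)
        (B := fun s => lam⁻¹ * r s ^ k + ε * Real.exp (C * s))
        (B' := fun s => lam⁻¹ * (r' s * k * r s ^ (k - 1)) + ε * (Real.exp (C * s) * C))
        ?_ ?_ ?_ ?_ ?_ ?_ htT
      · exact fun s hs => (hgC1 s hs.1).continuousAt.continuousWithinAt
      · exact fun x hx => (hgC1 x hx.1).hasDerivWithinAt
      · have hx : g 0 ≤ lam⁻¹ * r 0 ^ k + ε * Real.exp (C * 0) := by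
          have := Real.exp_pos (C * 0)
          nlinarith
        exact hx
      · have hrc : ContinuousOn r (Set.Icc 0 T) :=
          fun s hs => (hrC1 s hs.1).continuousAt.continuousWithinAt
        exact (continuousOn_const.mul
            (hrc.rpow_const fun s hs => Or.inl (hrpos s hs.1).ne')).add
          ((continuous_const.mul
            (Real.continuous_exp.comp (continuous_const.mul continuous_id))).continuousOn)
      · intro x hx
        have h1 : HasDerivWithinAt (fun s => r s ^ k) (r' x * k * r x ^ (k - 1))
            (Set.Ici x) x :=
          (hrC1 x hx.1).hasDerivWithinAt.rpow_const (Or.inl (hrpos x hx.1).ne')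
        have h2 : HasDerivAt (fun s => ε * Real.exp (C * s)) (ε * (Real.exp (C * x) * C)) x := by
          have h3 := ((hasDerivAt_id x).const_mul C).exp
          simpa using h3.const_mul ε
        exact (h1.const_mul lam⁻¹).add h2.hasDerivWithinAt
      · intro x hx heq
        have hx0 : 0 ≤ x := hx.1
        have hR0 : 0 < r x := hrpos x hx0
        have hRb0 : 0 < r x ^ (-b) := Real.rpow_pos_of_pos hR0 (-b)
        have hδ0 : 0 < ε * Real.exp (C * x) := by positivity
        have hδ1 : ε * Real.exp (C * x) ≤ 1 := by
          have h1 : Real.exp (C * x) ≤ Real.exp (C * T) :=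
            Real.exp_le_exp.2 (mul_le_mul_of_nonneg_left hx.2.le hC0.le)
          calc ε * Real.exp (C * x) ≤ Real.exp (-(C * T)) * Real.exp (C * T) :=
                mul_le_mul hεle h1 (Real.exp_pos _).le (Real.exp_pos _).le
            _ = 1 := by rw [← Real.exp_add]; simp
        have hμ0 : (0:ℝ) < lam⁻¹ * r x ^ k := by positivity
        have heq' : g x = lam⁻¹ * r x ^ k + ε * Real.exp (C * x) := heq
        set μ : ℝ := lam⁻¹ * r x ^ k with hμ
        set δ : ℝ := ε * Real.exp (C * x) with hδ
        -- mean value theorem for y ↦ y ^ p between μ and μ + δ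
        obtain ⟨c, hcmem, hcslope⟩ := exists_hasDerivAt_eq_slope (fun y => y ^ p)
          (fun y => p * y ^ (p - 1)) (by linarith : μ < μ + δ)
          (by
            refine ContinuousOn.rpow_const continuousOn_id fun y hy => Or.inl ?_
            have : (0:ℝ) < y := lt_of_lt_of_le hμ0 hy.1
            exact this.ne')
          (fun y hy => Real.hasDerivAt_rpow_const
            (Or.inl (lt_of_lt_of_le hμ0 hy.1.le).ne'))
        have hc0 : 0 < c := hμ0.trans hcmem.1
        rw [show μ + δ - μ = δ by ring] at hcslope
        have hslope2 : (μ + δ) ^ p - μ ^ p = p * c ^ (p - 1) * δ := by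
          field_simp at hcslope
          linarith [hcslope]
        -- bounds
        have hμM : μ + δ ≤ M := by
          have h1 : r x ^ k ≤ r 0 ^ k :=
            Real.rpow_le_rpow hR0.le (hrle 0 x le_rfl hx0) hk0.le
          have h2 : lam⁻¹ * r x ^ k ≤ lam⁻¹ * r 0 ^ k :=
            mul_le_mul_of_nonneg_left h1 (by positivity)
          rw [hM]; linarith
        have hcM : c ^ (p - 1) ≤ M ^ (p - 1) :=
          Real.rpow_le_rpow hc0.le (le_trans hcmem.2.le hμM) hp1.le
        have hrxb : r x ^ (-b) ≤ r T ^ (-b) :=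
          Real.rpow_le_rpow_of_nonpos hrT0 (hrle x T hx0 hx.2.le) (by linarith)
        have hterm : c₃ * r x ^ (-b) * ((μ + δ) ^ p - μ ^ p) ≤ C * δ := by
          rw [hslope2]
          calc c₃ * r x ^ (-b) * (p * c ^ (p - 1) * δ)
              = (c₃ * r x ^ (-b) * p * c ^ (p - 1)) * δ := by ring
            _ ≤ (c₃ * r T ^ (-b) * p * M ^ (p - 1)) * δ := by
                apply mul_le_mul_of_nonneg_right _ hδ0.le
                have h1 : c₃ * r x ^ (-b) * p ≤ c₃ * r T ^ (-b) * p :=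
                  mul_le_mul_of_nonneg_right
                    (mul_le_mul_of_nonneg_left hrxb hc₃.le) (by positivity)
                apply mul_le_mul h1 hcM (by positivity) (by positivity)
            _ = C * δ := by rw [hC]
        -- assemble
        have h0 := hineq x hx0
        have hsplit : -g x + c₃ * r x ^ (-b) * g x ^ p + c₂ * |r' x| * r x ^ (-b)
            = (-(lam⁻¹ * r x ^ k) + c₃ * r x ^ (-b) * (lam⁻¹ * r x ^ k) ^ p
                + c₂ * |r' x| * r x ^ (-b))
              + (-δ + c₃ * r x ^ (-b) * ((μ + δ) ^ p - μ ^ p)) := by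
          rw [heq']; rw [hμ]; ring
        have hb1 := Hbar x hx0
        show g' x < lam⁻¹ * (r' x * k * r x ^ (k - 1)) + ε * (Real.exp (C * x) * C)
        have hCδ : C * δ = ε * (Real.exp (C * x) * C) := by rw [hδ]; ring
        calc g' x ≤ -g x + c₃ * r x ^ (-b) * g x ^ p + c₂ * |r' x| * r x ^ (-b) := h0
          _ = (-(lam⁻¹ * r x ^ k) + c₃ * r x ^ (-b) * (lam⁻¹ * r x ^ k) ^ p
                + c₂ * |r' x| * r x ^ (-b))
              + (-δ + c₃ * r x ^ (-b) * ((μ + δ) ^ p - μ ^ p)) := hsplit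
          _ ≤ lam⁻¹ * (r' x * k * r x ^ (k - 1)) + (-δ + C * δ) := by
              have := hterm
              linarith
          _ < lam⁻¹ * (r' x * k * r x ^ (k - 1)) + ε * (Real.exp (C * x) * C) := by
              rw [← hCδ]; linarith
    -- let ε → 0
    intro t htT
    refine le_of_forall_pos_le_add ?_
    intro ε' hε'
    set ε : ℝ := Real.exp (-(C * T)) * min 1 ε' with hε
    have hmin0 : 0 < min 1 ε' := lt_min one_pos hε'
    have hε0 : 0 < ε := by positivity
    have hεle : ε ≤ Real.exp (-(C * T)) := by
      calc ε ≤ Real.exp (-(C * T)) * 1 :=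
            mul_le_mul_of_nonneg_left (min_le_left 1 ε') (Real.exp_pos _).le
        _ = Real.exp (-(C * T)) := mul_one _
    have h1 := keyε ε hε0 hεle t htT
    have h2 : ε * Real.exp (C * t) ≤ ε' := by
      have h3 : Real.exp (C * t) ≤ Real.exp (C * T) :=
        Real.exp_le_exp.2 (mul_le_mul_of_nonneg_left htT.2 hC0.le)
      calc ε * Real.exp (C * t) ≤ ε * Real.exp (C * T) :=
            mul_le_mul_of_nonneg_left h3 hε0.le
        _ = min 1 ε' * (Real.exp (-(C * T)) * Real.exp (C * T)) := by rw [hε]; ring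
        _ = min 1 ε' := by rw [← Real.exp_add]; simp
        _ ≤ ε' := min_le_right _ _
    linarith
  have hmain : ∀ t, 0 ≤ t → g t ≤ lam⁻¹ * r t ^ k :=
    fun t ht => key t ht t ⟨ht, le_rfl⟩
  refine ⟨hmain, ?_⟩
  have hrk : Tendsto (fun t => lam⁻¹ * r t ^ k) atTop (nhds 0) := by
    have h1 : ContinuousAt (fun x : ℝ => x ^ k) 0 :=
      Real.continuousAt_rpow_const 0 k (Or.inr hk0.le)
    have h2 := h1.tendsto.comp hrlim
    rw [Real.zero_rpow hk0.ne'] at h2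
    have h3 := h2.const_mul lam⁻¹
    simpa using h3
  exact squeeze_zero' (Filter.eventually_atTop.2 ⟨0, fun t ht => hg0 t ht⟩)
    (Filter.eventually_atTop.2 ⟨0, fun t ht => hmain t ht⟩) hrk
end

section
/- Let A be a closed, densely defined linear operator on a Hilbert space H, T := A*A, and suppose f = A y₀ for some y₀ ∈ H. Then for each a > 0 the element u_a := (T + aI)^{-1} A* f is well-defined, and y := lim_{a→0⁺} u_a exists, satisfies A y = f, and y is orthogonal to the null-space N(A); i.e., y is the minimal-norm solution of A u = f. -/
open Filter ContinuousLinearMap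

set_option maxHeartbeats 1600000 in
/-- Minimal-norm solution via regularization (bounded-operator version, as the
context allows restricting to bounded A). T = A*A, u_a = (T + aI)⁻¹ A* f. -/
theorem stmt_17 {H : Type*} [NormedAddCommGroup H] [InnerProductSpace ℂ H] [CompleteSpace H]
    (A : H →L[ℂ] H) (f y₀ : H) (hf : A y₀ = f)
    (T : H →L[ℂ] H) (hT : T = (ContinuousLinearMap.adjoint A).comp A) :
    (∀ a : ℝ, 0 < a → IsUnit (T + (a : ℂ) • (1 : H →L[ℂ] H))) ∧
    ∃ y : H,
      Tendsto (fun a : ℝ => Ring.inverse (T + (a : ℂ) • (1 : H →L[ℂ] H))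
          ((ContinuousLinearMap.adjoint A) f))
        (nhdsWithin 0 (Set.Ioi 0)) (nhds y) ∧
      A y = f ∧
      ∀ x ∈ LinearMap.ker (A : H →ₗ[ℂ] H), (inner ℂ y x : ℂ) = 0 := by
  set S : ℝ → (H →L[ℂ] H) := fun a => T + (a : ℂ) • (1 : H →L[ℂ] H) with hSdef
  have hadj : ∀ x : H, (inner ℂ (T x) x : ℂ) = inner ℂ (A x) (A x) := by
    intro x
    rw [hT, ContinuousLinearMap.comp_apply, ContinuousLinearMap.adjoint_inner_left]
  have hSapp : ∀ (a : ℝ) (x : H), S a x = T x + (a : ℂ) • x := by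
    intro a x; simp [hSdef]
  have hre : ∀ (a : ℝ) (x : H),
      RCLike.re (inner ℂ (S a x) x : ℂ) = ‖A x‖ ^ 2 + a * ‖x‖ ^ 2 := by
    intro a x
    rw [hSapp, inner_add_left, hadj, inner_smul_left, Complex.conj_ofReal,
      inner_self_eq_norm_sq_to_K (𝕜 := ℂ) (A x), inner_self_eq_norm_sq_to_K (𝕜 := ℂ) x]
    rw [map_add, ← RCLike.ofReal_pow, ← RCLike.ofReal_pow]
    simp [RCLike.ofReal_re, RCLike.re_to_complex, ← Complex.ofReal_pow]
  -- lower bound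
  have hlow : ∀ a : ℝ, 0 < a → ∀ x : H, a * ‖x‖ ≤ ‖S a x‖ := by
    intro a ha x
    rcases eq_or_ne x 0 with rfl | hx
    · simp
    have hxpos : 0 < ‖x‖ := norm_pos_iff.2 hx
    have h1 : a * ‖x‖ ^ 2 ≤ RCLike.re (inner ℂ (S a x) x : ℂ) := by
      rw [hre]; nlinarith [sq_nonneg ‖A x‖]
    have h2 : RCLike.re (inner ℂ (S a x) x : ℂ) ≤ ‖S a x‖ * ‖x‖ := re_inner_le_norm _ _
    have h3 : (a * ‖x‖) * ‖x‖ ≤ ‖S a x‖ * ‖x‖ := by nlinarith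
    exact le_of_mul_le_mul_right h3 hxpos
  -- units
  have hUnit : ∀ a : ℝ, 0 < a → IsUnit (S a) := by
    intro a ha
    have hanti : AntilipschitzWith ⟨a⁻¹, by positivity⟩ (S a) := by
      apply ContinuousLinearMap.antilipschitz_of_bound
      intro x
      have h := hlow a ha x
      show ‖x‖ ≤ a⁻¹ * ‖S a x‖
      rw [inv_mul_eq_div, le_div_iff₀ ha]
      linarith
    have hinj : LinearMap.ker (S a : H →ₗ[ℂ] H) = ⊥ := LinearMap.ker_eq_bot.2 hanti.injective
    have hclosed : IsClosed (Set.range (S a)) :=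
      hanti.isClosed_range (S a).uniformContinuous
    have hdense : (LinearMap.range (S a : H →ₗ[ℂ] H))ᗮ = ⊥ := by
      rw [Submodule.eq_bot_iff]
      intro w hw
      have h0 : (inner ℂ ((S a) w) w : ℂ) = 0 :=
        (Submodule.mem_orthogonal _ w).1 hw _ (LinearMap.mem_range_self _ w)
      have h1 : RCLike.re (inner ℂ ((S a) w) w : ℂ) = 0 := by rw [h0]; simp
      rw [hre] at h1
      have h2 : ‖w‖ ^ 2 ≤ 0 := by nlinarith [sq_nonneg ‖A w‖]
      have h3 : ‖w‖ ^ 2 = 0 := le_antisymm h2 (sq_nonneg _)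
      exact norm_eq_zero.1 ((pow_eq_zero_iff two_ne_zero).1 h3)
    have hrange : LinearMap.range (S a : H →ₗ[ℂ] H) = ⊤ := by
      have hcl : (LinearMap.range (S a : H →ₗ[ℂ] H)).topologicalClosure = LinearMap.range (S a : H →ₗ[ℂ] H) :=
        le_antisymm
          (Submodule.topologicalClosure_minimal _ le_rfl
            (by rw [LinearMap.coe_range]; exact hclosed))
          (Submodule.le_topologicalClosure _)
      have h2 := Submodule.orthogonal_orthogonal_eq_closure (LinearMap.range (S a : H →ₗ[ℂ] H))
      rw [hdense, Submodule.bot_orthogonal_eq_top] at h2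
      rw [← hcl, ← h2]
    let e := ContinuousLinearEquiv.ofBijective (S a) hinj hrange
    refine ⟨⟨S a, (e.symm : H →L[ℂ] H), ?_, ?_⟩, rfl⟩
    · ext x
      show S a (e.symm x) = x
      exact ContinuousLinearEquiv.ofBijective_apply_symm_apply (S a) hinj hrange x
    · ext x
      show e.symm (S a x) = x
      exact ContinuousLinearEquiv.ofBijective_symm_apply_apply (S a) hinj hrange x
  -- inverse applied
  have hBS : ∀ a : ℝ, 0 < a → ∀ x : H, Ring.inverse (S a) (S a x) = x := by
    intro a ha x
    have h := Ring.inverse_mul_cancel (S a) (hUnit a ha)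
    calc Ring.inverse (S a) (S a x) = (Ring.inverse (S a) * S a) x := rfl
      _ = x := by rw [h]; rfl
  have hSB : ∀ a : ℝ, 0 < a → ∀ u : H, S a (Ring.inverse (S a) u) = u := by
    intro a ha u
    have h := Ring.mul_inverse_cancel (S a) (hUnit a ha)
    calc S a (Ring.inverse (S a) u) = (S a * Ring.inverse (S a)) u := rfl
      _ = u := by rw [h]; rfl
  -- norm bound on inverse
  have hinvbd : ∀ a : ℝ, 0 < a → ∀ u : H, ‖Ring.inverse (S a) u‖ ≤ ‖u‖ / a := by
    intro a ha u
    have h := hlow a ha (Ring.inverse (S a) u)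
    rw [hSB a ha u] at h
    rw [le_div_iff₀ ha]
    linarith
  -- the minimal norm solution
  set C : Submodule ℂ H := (LinearMap.range (T : H →ₗ[ℂ] H)).topologicalClosure with hCdef
  haveI : C.HasOrthogonalProjection := by
    haveI : CompleteSpace C :=
      (Submodule.isClosed_topologicalClosure _).completeSpace_coe
    infer_instance
  set y : H := (Submodule.orthogonalProjectionOnto C y₀ : H) with hydef
  have hyC : y ∈ C := (Submodule.orthogonalProjectionOnto C y₀).2
  have hkerC : ∀ w : H, w ∈ Cᗮ → A w = 0 := by
    intro w hw
    have hTw : T w ∈ C := Submodule.le_topologicalClosure _ (LinearMap.mem_range_self (T : H →ₗ[ℂ] H) w)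
    have h0 : (inner ℂ (T w) w : ℂ) = 0 := (Submodule.mem_orthogonal C w).1 hw _ hTw
    rw [hadj] at h0
    exact inner_self_eq_zero.1 h0
  have hAy : A y = f := by
    have hsub : y₀ - y ∈ Cᗮ := Submodule.sub_starProjection_mem_orthogonal (K := C) y₀
    have h0 : A (y₀ - y) = 0 := hkerC _ hsub
    rw [map_sub, sub_eq_zero] at h0
    rw [← h0, hf]
  have horth : ∀ x ∈ LinearMap.ker (A : H →ₗ[ℂ] H), (inner ℂ y x : ℂ) = 0 := by
    intro x hx
    have hx0 : A x = 0 := hx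
    have hC : C ≤ LinearMap.ker (innerSL ℂ x : H →ₗ[ℂ] ℂ) := by
      apply Submodule.topologicalClosure_minimal _ _ (ContinuousLinearMap.isClosed_ker _)
      rintro v ⟨z, rfl⟩
      show (inner ℂ x (T z) : ℂ) = 0
      rw [hT, ContinuousLinearMap.comp_apply, ContinuousLinearMap.adjoint_inner_right, hx0,
        inner_zero_left]
    have hy0 : (inner ℂ x y : ℂ) = 0 := hC hyC
    rw [← inner_conj_symm, hy0, map_zero]
  -- A† f = T y
  have hAdf : (ContinuousLinearMap.adjoint A) f = T y := by
    rw [← hAy, hT, ContinuousLinearMap.comp_apply]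
  -- y is in the closure of range T (as a set)
  have hyCl : y ∈ closure ((LinearMap.range (T : H →ₗ[ℂ] H) : Submodule ℂ H) : Set H) := by
    rw [← Submodule.topologicalClosure_coe]; exact hyC
  -- key limit
  have key : Tendsto (fun a : ℝ => (a : ℂ) • Ring.inverse (S a) y)
      (nhdsWithin 0 (Set.Ioi 0)) (nhds 0) := by
    rw [NormedAddCommGroup.tendsto_nhds_zero]
    intro ε hε
    obtain ⟨w, hwmem, hwd⟩ := Metric.mem_closure_iff.1 hyCl (ε / 2) (by positivity)
    obtain ⟨z, rfl⟩ := hwmem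
    have hdy : ‖y - T z‖ < ε / 2 := by rwa [dist_eq_norm] at hwd
    have hz1 : (0:ℝ) < ‖z‖ + 1 := by positivity
    set δ : ℝ := ε / (4 * (‖z‖ + 1)) with hδdef
    have hδpos : 0 < δ := by positivity
    filter_upwards [Ioo_mem_nhdsGT_of_mem (show (0:ℝ) ∈ Set.Ico 0 δ from ⟨le_rfl, hδpos⟩)]
      with a ha
    obtain ⟨ha0, haδ⟩ := ha
    have hTz : T z = S a z - (a : ℂ) • z := by rw [hSapp]; abel
    have hBTz : Ring.inverse (S a) (T z) = z - (a : ℂ) • Ring.inverse (S a) z := by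
      rw [hTz, map_sub, hBS a ha0, map_smul]
    have hsplit : Ring.inverse (S a) y
        = Ring.inverse (S a) (y - T z) + (z - (a : ℂ) • Ring.inverse (S a) z) := by
      rw [← hBTz, ← map_add]
      congr 1
      abel
    have hca : ‖(a : ℂ)‖ = a := by
      rw [Complex.norm_real, Real.norm_eq_abs, abs_of_pos ha0]
    have t1 : ‖(a : ℂ) • Ring.inverse (S a) (y - T z)‖ < ε / 2 := by
      rw [norm_smul, hca]
      calc a * ‖Ring.inverse (S a) (y - T z)‖ ≤ a * (‖y - T z‖ / a) := by
            apply mul_le_mul_of_nonneg_left (hinvbd a ha0 _) ha0.le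
        _ = ‖y - T z‖ := by field_simp
        _ < ε / 2 := hdy
    have t2 : ‖(a : ℂ) • (z - (a : ℂ) • Ring.inverse (S a) z)‖ ≤ 2 * (a * ‖z‖) := by
      rw [norm_smul, hca]
      have h1 : ‖z - (a : ℂ) • Ring.inverse (S a) z‖ ≤ ‖z‖ + ‖(a : ℂ) • Ring.inverse (S a) z‖ :=
        norm_sub_le _ _
      have h2 : ‖(a : ℂ) • Ring.inverse (S a) z‖ ≤ ‖z‖ := by
        rw [norm_smul, hca]
        calc a * ‖Ring.inverse (S a) z‖ ≤ a * (‖z‖ / a) := by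
              apply mul_le_mul_of_nonneg_left (hinvbd a ha0 _) ha0.le
          _ = ‖z‖ := by field_simp
      nlinarith [norm_nonneg z]
    have t3 : 2 * (a * ‖z‖) < ε / 2 := by
      have : a * ‖z‖ < δ * (‖z‖ + 1) := by nlinarith [norm_nonneg z]
      have hδe : δ * (‖z‖ + 1) = ε / 4 := by rw [hδdef]; field_simp
      nlinarith
    calc ‖(a : ℂ) • Ring.inverse (S a) y‖
        = ‖(a : ℂ) • Ring.inverse (S a) (y - T z)
            + (a : ℂ) • (z - (a : ℂ) • Ring.inverse (S a) z)‖ := by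
          rw [hsplit, smul_add]
      _ ≤ ‖(a : ℂ) • Ring.inverse (S a) (y - T z)‖
            + ‖(a : ℂ) • (z - (a : ℂ) • Ring.inverse (S a) z)‖ := norm_add_le _ _
      _ < ε / 2 + ε / 2 := by
          apply add_lt_add_of_lt_of_le t1 (le_of_lt (lt_of_le_of_lt t2 t3))
      _ = ε := by ring
  refine ⟨hUnit, y, ?_, hAy, horth⟩
  have hfinal : Tendsto (fun a : ℝ => y - (a : ℂ) • Ring.inverse (S a) y)
      (nhdsWithin 0 (Set.Ioi 0)) (nhds y) := by
    have hconst : Tendsto (fun _ : ℝ => y) (nhdsWithin 0 (Set.Ioi 0)) (nhds y) :=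
      tendsto_const_nhds
    have h2 := hconst.sub key
    rwa [sub_zero] at h2
  refine Tendsto.congr' ?_ hfinal
  filter_upwards [self_mem_nhdsWithin] with a (ha : a ∈ Set.Ioi (0:ℝ))
  have ha0 : (0:ℝ) < a := ha
  have hTy : T y = S a y - (a : ℂ) • y := by rw [hSapp]; abel
  show y - (a : ℂ) • Ring.inverse (S a) y = Ring.inverse (S a) ((ContinuousLinearMap.adjoint A) f)
  rw [hAdf, hTy, map_sub, hBS a ha0, map_smul]
end
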